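/- Let k be a finite field with q elements, let X be a nonempty type, and fix x ∈ X. Let W = k·1 + T^{(2)} + I, where k·1 is the k-span of the identity of k⟨X⟩ and I is the T-ideal of k⟨X⟩ generated by ι(x) − ι(x)^q. Then W is a maximal T-space of k⟨X⟩: W ≠ k⟨X⟩, and every T-space U of k⟨X⟩ with W ⊊ U satisfies U = k⟨X⟩. -/

import Mathlib

set_option synthInstance.maxHeartbeats 1000000
set_option maxHeartbeats 1000000


/-- A T-space of the free unital associative algebra `k⟨X⟩`: a `k`-submodule invariant
under every `k`-algebra endomorphism of `k⟨X⟩`. -/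
def IsTSpaceF (k X : Type*) [Field k] (V : Submodule k (FreeAlgebra k X)) : Prop :=
  ∀ φ : FreeAlgebra k X →ₐ[k] FreeAlgebra k X, ∀ v ∈ V, φ v ∈ V

/-- The T-space of `k⟨X⟩` generated by a set `S`. -/
def TSpaceGenF (k X : Type*) [Field k] (S : Set (FreeAlgebra k X)) :
    Submodule k (FreeAlgebra k X) :=
  sInf {V | IsTSpaceF k X V ∧ S ⊆ (V : Set (FreeAlgebra k X))}

/-- A T-ideal of `k⟨X⟩`: a two-sided ideal that is also a T-space. -/
def IsTIdealF (k X : Type*) [Field k] (V : Submodule k (FreeAlgebra k X)) : Prop :=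
  IsTSpaceF k X V ∧ ∀ a ∈ V, ∀ r : FreeAlgebra k X, r * a ∈ V ∧ a * r ∈ V

/-- The T-ideal of `k⟨X⟩` generated by a set `S`. -/
def TIdealGenF (k X : Type*) [Field k] (S : Set (FreeAlgebra k X)) :
    Submodule k (FreeAlgebra k X) :=
  sInf {V | IsTIdealF k X V ∧ S ⊆ (V : Set (FreeAlgebra k X))}

/-- `T⁽²⁾`: the smallest T-ideal of `k⟨X⟩` containing all commutators `ab - ba`. -/
def T2 (k X : Type*) [Field k] : Submodule k (FreeAlgebra k X) :=
  sInf {V | IsTIdealF k X V ∧ ∀ a b : FreeAlgebra k X, a * b - b * a ∈ V}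

namespace WMax

variable {k X : Type*} [Field k]

theorem isTIdeal_sInf {S : Set (Submodule k (FreeAlgebra k X))}
    (h : ∀ V ∈ S, IsTIdealF k X V) : IsTIdealF k X (sInf S) := by
  constructor
  · intro φ v hv
    rw [Submodule.mem_sInf] at hv ⊢
    intro V hV; exact (h V hV).1 φ v (hv V hV)
  · intro a ha r
    rw [Submodule.mem_sInf] at ha
    constructor <;> (rw [Submodule.mem_sInf]; intro V hV)
    · exact ((h V hV).2 a (ha V hV) r).1
    · exact ((h V hV).2 a (ha V hV) r).2

theorem isTIdeal_T2 : IsTIdealF k X (T2 k X) := isTIdeal_sInf fun _ hV => hV.1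

theorem comm_mem_T2 (a b : FreeAlgebra k X) : a * b - b * a ∈ T2 k X := by
  rw [T2, Submodule.mem_sInf]; exact fun V hV => hV.2 a b

theorem T2_le {V : Submodule k (FreeAlgebra k X)} (h1 : IsTIdealF k X V)
    (h2 : ∀ a b : FreeAlgebra k X, a * b - b * a ∈ V) : T2 k X ≤ V := sInf_le ⟨h1, h2⟩

theorem isTIdeal_TIdealGenF (S : Set (FreeAlgebra k X)) : IsTIdealF k X (TIdealGenF k X S) :=
  isTIdeal_sInf fun _ hV => hV.1

theorem subset_TIdealGenF {S : Set (FreeAlgebra k X)} {a} (ha : a ∈ S) : a ∈ TIdealGenF k X S := by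
  rw [TIdealGenF, Submodule.mem_sInf]; exact fun V hV => hV.2 ha

theorem TIdealGenF_le {S : Set (FreeAlgebra k X)} {V : Submodule k (FreeAlgebra k X)}
    (h1 : IsTIdealF k X V) (h2 : S ⊆ V) : TIdealGenF k X S ≤ V := sInf_le ⟨h1, h2⟩

theorem mul_congr_T2 {a a' b b' : FreeAlgebra k X} (ha : a - a' ∈ T2 k X)
    (hb : b - b' ∈ T2 k X) : a * b - a' * b' ∈ T2 k X := by
  have : a * b - a' * b' = (a - a') * b + a' * (b - b') := by
    rw [sub_mul, mul_sub]; abel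
  rw [this]
  exact add_mem ((isTIdeal_T2.2 _ ha b).2) ((isTIdeal_T2.2 _ hb a').1)

theorem prod_perm_mem_T2 : ∀ {l l' : List (FreeAlgebra k X)}, l.Perm l' →
    l.prod - l'.prod ∈ T2 k X := by
  intro l l' h
  induction h with
  | nil => simpa using zero_mem (T2 k X)
  | cons a h ih =>
      rw [List.prod_cons, List.prod_cons, ← mul_sub]
      exact (isTIdeal_T2.2 _ ih a).1
  | swap a b l =>
      rw [List.prod_cons, List.prod_cons, List.prod_cons, List.prod_cons,
        ← mul_assoc, ← mul_assoc, ← sub_mul]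
      exact (isTIdeal_T2.2 _ (comm_mem_T2 b a) l.prod).2
  | trans h1 h2 ih1 ih2 =>
      have := add_mem ih1 ih2
      simpa using this

/-- the abelianization map to polynomials -/
noncomputable def piAb : FreeAlgebra k X →ₐ[k] MvPolynomial X k :=
  FreeAlgebra.lift k MvPolynomial.X

theorem piAb_surjective : Function.Surjective (piAb : FreeAlgebra k X →ₐ[k] MvPolynomial X k) := by
  intro p
  have h1 : p ∈ (piAb (k := k) (X := X)).range := by
    have : (piAb (k := k) (X := X)).range = ⊤ := by
      rw [← top_le_iff, ← MvPolynomial.adjoin_range_X]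
      apply Algebra.adjoin_le
      rintro _ ⟨y, rfl⟩
      exact ⟨FreeAlgebra.ι k y, by simp [piAb]⟩
    simp [this]
  exact h1

section Order

variable [LinearOrder X]

/-- product of the generators of a monomial, in sorted order -/
noncomputable def listProd (m : X →₀ ℕ) : FreeAlgebra k X :=
  ((m.toMultiset.sort (· ≤ ·)).map (FreeAlgebra.ι k)).prod

/-- linear section of `piAb` sending each monomial to the sorted product -/
noncomputable def sec : MvPolynomial X k →ₗ[k] FreeAlgebra k X :=
  (MvPolynomial.basisMonomials X k).constr k listProd

theorem sec_monomial (m : X →₀ ℕ) (c : k) :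
    sec (MvPolynomial.monomial m c) = c • (listProd m : FreeAlgebra k X) := by
  have h1 : (MvPolynomial.monomial m c : MvPolynomial X k)
      = c • MvPolynomial.monomial m 1 := by
    rw [MvPolynomial.smul_monomial, smul_eq_mul, mul_one]
  rw [h1, map_smul]
  congr 1
  have h2 : (MvPolynomial.monomial m 1 : MvPolynomial X k)
      = MvPolynomial.basisMonomials X k m := by
    rw [MvPolynomial.coe_basisMonomials]
  rw [h2, sec, Module.Basis.constr_basis]

theorem listX_prod (l : List X) :
    (l.map (MvPolynomial.X : X → MvPolynomial X k)).prod
      = MvPolynomial.monomial (Multiset.toFinsupp (l : Multiset X)) 1 := by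
  classical
  induction l with
  | nil => simp [MvPolynomial.monomial_zero']
  | cons a l ih =>
      rw [List.map_cons, List.prod_cons, ih]
      have hX : MvPolynomial.X (R := k) a = MvPolynomial.monomial (Finsupp.single a 1) 1 := by
        rw [← MvPolynomial.X_pow_eq_monomial, pow_one]
      have hc : ((a :: l : List X) : Multiset X) = {a} + (l : Multiset X) := by
        rw [Multiset.singleton_add, Multiset.cons_coe]
      rw [hX, MvPolynomial.monomial_mul, one_mul, hc, Multiset.toFinsupp_add,
        Multiset.toFinsupp_singleton]
  
theorem piAb_listProd (m : X →₀ ℕ) :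
    piAb (listProd m : FreeAlgebra k X) = MvPolynomial.monomial m 1 := by
  classical
  rw [listProd, map_list_prod, List.map_map]
  have h1 : (piAb (k := k) (X := X)) ∘ FreeAlgebra.ι k = MvPolynomial.X := by
    funext y; simp [piAb]
  rw [h1, listX_prod, Multiset.sort_eq, Finsupp.toMultiset_toFinsupp]

theorem piAb_sec (p : MvPolynomial X k) : piAb (sec p : FreeAlgebra k X) = p := by
  induction p using MvPolynomial.induction_on' with
  | monomial m c =>
      rw [sec_monomial, map_smul, piAb_listProd, MvPolynomial.smul_monomial, smul_eq_mul, mul_one]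
  | add p q hp hq => rw [map_add, map_add, hp, hq]

theorem listProd_mul_mem (m n : X →₀ ℕ) :
    (listProd m : FreeAlgebra k X) * listProd n - listProd (m + n) ∈ T2 k X := by
  classical
  have h1 : ((m.toMultiset.sort (· ≤ ·) ++ n.toMultiset.sort (· ≤ ·) : List X) : Multiset X)
      = (((m + n).toMultiset.sort (· ≤ ·) : List X) : Multiset X) := by
    rw [← Multiset.coe_add, Multiset.sort_eq, Multiset.sort_eq, Multiset.sort_eq,
      Finsupp.toMultiset_add]
  have hperm := (Multiset.coe_eq_coe.mp h1).map (FreeAlgebra.ι k)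
  have h2 := prod_perm_mem_T2 hperm
  rwa [List.map_append, List.prod_append] at h2

theorem sec_mul_mem (p q : MvPolynomial X k) :
    (sec p : FreeAlgebra k X) * sec q - sec (p * q) ∈ T2 k X := by
  induction p using MvPolynomial.induction_on' with
  | monomial m c =>
      induction q using MvPolynomial.induction_on' with
      | monomial n d =>
          rw [sec_monomial, sec_monomial, MvPolynomial.monomial_mul, sec_monomial]
          have h3 : (c • listProd m) * (d • listProd n)
              - (c * d) • (listProd (m + n) : FreeAlgebra k X)
              = (c * d) • (listProd m * listProd n - listProd (m + n)) := by
            rw [smul_sub, smul_mul_assoc, mul_smul_comm, smul_smul]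
          rw [h3]
          exact Submodule.smul_mem _ _ (listProd_mul_mem m n)
      | add q1 q2 hq1 hq2 =>
          have h4 : sec (MvPolynomial.monomial m c) * sec (q1 + q2)
              - sec (MvPolynomial.monomial m c * (q1 + q2))
              = (sec (MvPolynomial.monomial m c) * sec q1
                  - sec (MvPolynomial.monomial m c * q1))
                + (sec (MvPolynomial.monomial m c) * sec q2
                  - sec (MvPolynomial.monomial m c * q2)) := by
            rw [map_add, mul_add, mul_add, map_add]; abel
          rw [h4]; exact add_mem hq1 hq2
  | add p1 p2 hp1 hp2 =>
      have h5 : sec (p1 + p2) * sec q - sec ((p1 + p2) * q)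
          = (sec p1 * sec q - sec (p1 * q)) + (sec p2 * sec q - sec (p2 * q)) := by
        rw [map_add, add_mul, add_mul, map_add]; abel
      rw [h5]; exact add_mem hp1 hp2

theorem listProd_zero : (listProd 0 : FreeAlgebra k X) = 1 := by
  rw [listProd, Finsupp.toMultiset_zero, Multiset.sort_zero, List.map_nil, List.prod_nil]

theorem sub_sec_piAb_mem (f : FreeAlgebra k X) : f - sec (piAb f) ∈ T2 k X := by
  induction f with
  | grade0 r =>
      have : piAb (algebraMap k (FreeAlgebra k X) r) = MvPolynomial.C r := by
        rw [AlgHom.commutes]; rfl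
      rw [this, MvPolynomial.C_apply, sec_monomial, listProd_zero,
        Algebra.algebraMap_eq_smul_one, sub_self]
      exact zero_mem _
  | grade1 y =>
      have h1 : piAb (FreeAlgebra.ι k y : FreeAlgebra k X) = MvPolynomial.X y := by
        simp [piAb]
      have h2 : (MvPolynomial.X y : MvPolynomial X k)
          = MvPolynomial.monomial (Finsupp.single y 1) 1 := by
        rw [← MvPolynomial.X_pow_eq_monomial, pow_one]
      have h3 : (listProd (Finsupp.single y 1) : FreeAlgebra k X) = FreeAlgebra.ι k y := by
        rw [listProd, Finsupp.toMultiset_single, one_nsmul, Multiset.sort_singleton,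
          List.map_cons, List.map_nil, List.prod_cons, List.prod_nil, mul_one]
      rw [h1, h2, sec_monomial, h3, one_smul, sub_self]
      exact zero_mem _
  | mul a b ha hb =>
      have h1 : a * b - sec (piAb a) * sec (piAb b) ∈ T2 k X := mul_congr_T2 ha hb
      have h2 := sec_mul_mem (piAb a) (piAb b)
      have h3 : a * b - sec (piAb (a * b))
          = (a * b - sec (piAb a) * sec (piAb b))
            + (sec (piAb a) * sec (piAb b) - sec (piAb a * piAb b)) := by
        rw [map_mul]; abel
      rw [h3]; exact add_mem h1 h2
  | add a b ha hb =>
      have h3 : a + b - sec (piAb (a + b))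
          = (a - sec (piAb a)) + (b - sec (piAb b)) := by
        rw [map_add, map_add]; abel
      rw [h3]; exact add_mem ha hb

end Order

theorem mem_T2_of_piAb_eq_zero {f : FreeAlgebra k X} (h : piAb f = 0) : f ∈ T2 k X := by
  letI : LinearOrder X := IsWellOrder.linearOrder WellOrderingRel
  have := sub_sec_piAb_mem f
  rwa [h, map_zero, sub_zero] at this

/-! ### exponent reduction -/

/-- exponent reduction modulo the relation `a ^ q = a` -/
def Red (q : ℕ) (n : ℕ) : ℕ :=
  if _h : q - 1 < n ∧ 2 ≤ q then Red q (n - (q - 1)) else n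
termination_by n
decreasing_by omega

theorem Red_zero (q : ℕ) : Red q 0 = 0 := by
  rw [Red]; simp

theorem Red_le {q : ℕ} (hq : 2 ≤ q) (n : ℕ) : Red q n ≤ q - 1 := by
  induction n using Nat.strong_induction_on with
  | _ n ih =>
    rw [Red]
    split
    · next h => exact ih _ (by omega)
    · next h => omega

theorem Red_pos {q : ℕ} (n : ℕ) (h : 0 < n) : 0 < Red q n := by
  induction n using Nat.strong_induction_on with
  | _ n ih =>
    rw [Red]
    split
    · next h2 => exact ih _ (by omega) (by omega)
    · next h2 => omega

theorem pow_Red {M : Type*} [Monoid M] {q : ℕ} (hq : 2 ≤ q) (a : M) (ha : a ^ q = a)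
    (n : ℕ) : a ^ Red q n = a ^ n := by
  induction n using Nat.strong_induction_on with
  | _ n ih =>
    rw [Red]
    split
    · next h =>
        rw [ih _ (by omega)]
        calc a ^ (n - (q - 1)) = a ^ (n - q) * a := by
              rw [← pow_succ]; congr 1; omega
          _ = a ^ (n - q) * a ^ q := by rw [ha]
          _ = a ^ n := by rw [← pow_add]; congr 1; omega
    · next h => rfl

/-! ### finite-field Nullstellensatz -/

universe u v

theorem null_fin {k : Type u} [Field k] [Fintype k] {σ : Type v} [Fintype σ]
    (p : MvPolynomial σ k) (h : ∀ w : σ → k, MvPolynomial.eval w p = 0) :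
    p ∈ Ideal.span (Set.range fun i : σ =>
      (MvPolynomial.X i ^ Fintype.card k - MvPolynomial.X i : MvPolynomial σ k)) := by
  classical
  set q := Fintype.card k with hqdef
  have hq2 : 2 ≤ q := Fintype.one_lt_card
  set J := Ideal.span (Set.range fun i : σ =>
      (MvPolynomial.X i ^ q - MvPolynomial.X i : MvPolynomial σ k)) with hJ
  have hXq : ∀ i : σ, (Ideal.Quotient.mk J (MvPolynomial.X i)) ^ q
      = Ideal.Quotient.mk J (MvPolynomial.X i) := by
    intro i
    have hmem : (MvPolynomial.X i ^ q - MvPolynomial.X i : MvPolynomial σ k) ∈ J :=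
      Ideal.subset_span ⟨i, rfl⟩
    have h2 := (Ideal.Quotient.eq_zero_iff_mem).mpr hmem
    rw [map_sub, map_pow, sub_eq_zero] at h2
    exact h2
  have hred : ∀ p : MvPolynomial σ k,
      ∃ r ∈ MvPolynomial.restrictDegree σ k (q - 1), p - r ∈ J := by
    intro p
    induction p using MvPolynomial.induction_on' with
    | monomial m c =>
        set m' : σ →₀ ℕ := Finsupp.mapRange (Red q) (Red_zero q) m with hm'
        have hsupp : m'.support = m.support := by
          ext i
          simp only [Finsupp.mem_support_iff, hm', Finsupp.mapRange_apply]
          constructor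
          · intro hi h0; rw [h0, Red_zero] at hi; exact hi rfl
          · intro hi; exact (Red_pos _ (Nat.pos_of_ne_zero hi)).ne'
        refine ⟨MvPolynomial.monomial m' c, ?_, ?_⟩
        · rw [MvPolynomial.mem_restrictDegree]
          intro s hs i
          have hsub := MvPolynomial.support_monomial_subset hs
          rw [Finset.mem_singleton] at hsub
          subst hsub
          rw [Finsupp.mapRange_apply]
          exact Red_le hq2 _
        · rw [← Ideal.Quotient.eq_zero_iff_mem, map_sub, sub_eq_zero]
          rw [MvPolynomial.monomial_eq, MvPolynomial.monomial_eq, map_mul, map_mul]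
          congr 1
          rw [Finsupp.prod, Finsupp.prod, hsupp, map_prod, map_prod]
          apply Finset.prod_congr rfl
          intro i _
          rw [map_pow, map_pow, hm', Finsupp.mapRange_apply, pow_Red hq2 _ (hXq i)]
    | add p1 p2 hp1 hp2 =>
        obtain ⟨r1, hr1, hd1⟩ := hp1
        obtain ⟨r2, hr2, hd2⟩ := hp2
        refine ⟨r1 + r2, add_mem hr1 hr2, ?_⟩
        have heq : p1 + p2 - (r1 + r2) = (p1 - r1) + (p2 - r2) := by abel
        rw [heq]; exact add_mem hd1 hd2
  obtain ⟨r, hr1, hr2⟩ := hred p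
  have hJker : ∀ w : σ → k, ∀ g ∈ J, MvPolynomial.eval w g = 0 := by
    intro w g hg
    have hle : J ≤ RingHom.ker (MvPolynomial.eval w) := by
      rw [hJ, Ideal.span_le]
      rintro _ ⟨i, rfl⟩
      simp only [SetLike.mem_coe, RingHom.mem_ker, map_sub, map_pow, MvPolynomial.eval_X]
      rw [hqdef, FiniteField.pow_card, sub_self]
    exact RingHom.mem_ker.mp (hle hg)
  have hrvan : ∀ w : σ → k, MvPolynomial.eval w r = 0 := by
    intro w
    have h1 := hJker w _ hr2
    rw [map_sub, h w, zero_sub, neg_eq_zero] at h1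
    exact h1
  -- transport to a `Type u` index type to apply `eq_zero_of_eval_eq_zero`
  have hr0 : r = 0 := by
    let σ' : Type u := ULift.{u} (Fin (Fintype.card σ))
    let e : σ ≃ σ' := (Fintype.equivFin σ).trans Equiv.ulift.symm
    have hinj : Function.Injective e := e.injective
    have hred' : MvPolynomial.rename e r ∈ MvPolynomial.restrictDegree σ' k (q - 1) := by
      rw [MvPolynomial.mem_restrictDegree]
      intro s hs i
      rw [MvPolynomial.support_rename_of_injective hinj] at hs
      obtain ⟨m, hm, rfl⟩ := Finset.mem_image.mp hs
      rw [Finsupp.mapDomain_equiv_apply]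
      exact (MvPolynomial.mem_restrictDegree _ _ _).mp hr1 m hm (e.symm i)
    have hvan' : ∀ w : σ' → k, MvPolynomial.eval w (MvPolynomial.rename e r) = 0 := by
      intro w
      rw [MvPolynomial.eval_rename]
      exact hrvan _
    have h0 : MvPolynomial.rename e r = 0 := by
      apply MvPolynomial.eq_zero_of_eval_eq_zero σ' k _ hvan'
      rw [← hqdef]
      exact hred'
    have := MvPolynomial.rename_injective (R := k) e hinj
    apply this
    rw [h0, map_zero]
  rw [show p = p - r by rw [hr0, sub_zero]]
  exact hr2

theorem null_gen {k : Type u} [Field k] [Fintype k] {X : Type v}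
    (p : MvPolynomial X k) (h : ∀ w : X → k, MvPolynomial.eval w p = 0) :
    p ∈ Ideal.span {g : MvPolynomial X k |
      ∃ y : X, g = MvPolynomial.X y ^ Fintype.card k - MvPolynomial.X y} := by
  classical
  obtain ⟨s, p', rfl⟩ := MvPolynomial.exists_finset_rename p
  have h' : ∀ w : {x // x ∈ s} → k, MvPolynomial.eval w p' = 0 := by
    intro w
    set v : X → k := fun y => if hy : y ∈ s then w ⟨y, hy⟩ else 0 with hv
    have h1 : MvPolynomial.eval v (MvPolynomial.rename Subtype.val p')
        = MvPolynomial.eval (v ∘ Subtype.val) p' := by rw [MvPolynomial.eval_rename]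
    have h2 : v ∘ (Subtype.val : {x // x ∈ s} → X) = w := by
      funext y
      simp only [hv, Function.comp_apply]
      rw [dif_pos y.2]
    rw [← h2, ← h1]
    exact h _
  have hp' := null_fin p' h'
  have hmap := Ideal.mem_map_of_mem (MvPolynomial.rename (Subtype.val : {x // x ∈ s} → X)).toRingHom hp'
  rw [Ideal.map_span] at hmap
  refine Ideal.span_mono ?_ hmap
  rintro _ ⟨_, ⟨i, rfl⟩, rfl⟩
  refine ⟨i.val, ?_⟩
  simp [MvPolynomial.rename_X]


/-! ### evaluation machinery -/

section Eval

variable {k X : Type*} [Field k]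

/-- evaluation of a free-algebra element at a point -/
noncomputable def ev (p : X → k) : FreeAlgebra k X →ₐ[k] k := FreeAlgebra.lift k p

theorem ev_ι (p : X → k) (y : X) : ev p (FreeAlgebra.ι k y) = p y := by
  simp [ev]

theorem ev_algebraMap (p : X → k) (c : k) : ev p (algebraMap k (FreeAlgebra k X) c) = c := by
  rw [AlgHom.commutes]; rfl

theorem ev_comp (p : X → k) (φ : FreeAlgebra k X →ₐ[k] FreeAlgebra k X) (f : FreeAlgebra k X) :
    ev p (φ f) = ev (fun y => ev p (φ (FreeAlgebra.ι k y))) f := by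
  have h : (ev p).comp φ = ev (fun y => ev p (φ (FreeAlgebra.ι k y))) := by
    apply FreeAlgebra.hom_ext
    funext y
    simp [ev]
  exact DFunLike.congr_fun h f

/-- elements vanishing under all evaluations -/
def evanish (k X : Type*) [Field k] : Submodule k (FreeAlgebra k X) where
  carrier := {f | ∀ p : X → k, ev p f = 0}
  add_mem' := by intro a b ha hb; intro p; rw [map_add, ha p, hb p, add_zero]
  zero_mem' := by intro p; rw [map_zero]
  smul_mem' := by intro c f hf; intro p; rw [map_smul, hf p, smul_zero]

theorem mem_evanish {f : FreeAlgebra k X} : f ∈ evanish k X ↔ ∀ p : X → k, ev p f = 0 :=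
  Iff.rfl

theorem isTIdeal_evanish : IsTIdealF k X (evanish k X) := by
  constructor
  · intro φ v hv
    rw [mem_evanish] at hv ⊢
    intro p
    rw [ev_comp]
    exact hv _
  · intro a ha r
    rw [mem_evanish] at ha
    constructor <;> (rw [mem_evanish]; intro p)
    · rw [map_mul, ha p, mul_zero]
    · rw [map_mul, ha p, zero_mul]

theorem T2_le_evanish : T2 k X ≤ evanish k X :=
  T2_le isTIdeal_evanish fun a b => mem_evanish.mpr fun p => by
    rw [map_sub, map_mul, map_mul, mul_comm, sub_self]

theorem eval_piAb (v : X → k) (f : FreeAlgebra k X) :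
    MvPolynomial.eval v (piAb f) = ev v f := by
  have h : (MvPolynomial.aeval v).comp (piAb : FreeAlgebra k X →ₐ[k] _) = ev v := by
    apply FreeAlgebra.hom_ext; funext y; simp [piAb, ev]
  have h2 := DFunLike.congr_fun h f
  simp only [AlgHom.coe_comp, Function.comp_apply] at h2
  rw [← h2, ← MvPolynomial.coe_aeval_eq_eval]
  rfl

/-- elements all of whose evaluations agree -/
def constish (k X : Type*) [Field k] : Submodule k (FreeAlgebra k X) where
  carrier := {f | ∃ c : k, ∀ p : X → k, ev p f = c}
  add_mem' := by
    rintro a b ⟨c, hc⟩ ⟨d, hd⟩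
    exact ⟨c + d, fun p => by rw [map_add, hc p, hd p]⟩
  zero_mem' := ⟨0, fun p => map_zero _⟩
  smul_mem' := by
    rintro r a ⟨c, hc⟩
    exact ⟨r * c, fun p => by rw [map_smul, hc p, smul_eq_mul]⟩

theorem mem_constish {f : FreeAlgebra k X} :
    f ∈ constish k X ↔ ∃ c : k, ∀ p : X → k, ev p f = c := Iff.rfl

end Eval

section MainAux

variable {k X : Type*} [Field k] [Fintype k]

theorem gen_mem_I (x y : X) :
    FreeAlgebra.ι k y - FreeAlgebra.ι k y ^ Fintype.card k
      ∈ TIdealGenF k X {FreeAlgebra.ι k x - FreeAlgebra.ι k x ^ Fintype.card k} := by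
  have h0 : FreeAlgebra.ι k x - FreeAlgebra.ι k x ^ Fintype.card k
      ∈ TIdealGenF k X {FreeAlgebra.ι k x - FreeAlgebra.ι k x ^ Fintype.card k} :=
    subset_TIdealGenF rfl
  have h1 := (isTIdeal_TIdealGenF (k := k) (X := X) _).1
      (FreeAlgebra.lift k fun _ : X => FreeAlgebra.ι k y) _ h0
  simpa using h1

theorem I_le_evanish (x : X) :
    TIdealGenF k X {FreeAlgebra.ι k x - FreeAlgebra.ι k x ^ Fintype.card k}
      ≤ evanish k X := by
  apply TIdealGenF_le isTIdeal_evanish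
  intro g hg
  rw [Set.mem_singleton_iff] at hg
  subst hg
  rw [SetLike.mem_coe, mem_evanish]
  intro p
  rw [map_sub, map_pow, ev_ι, FiniteField.pow_card, sub_self]

theorem evanish_le_sup (x : X) :
    evanish k X ≤ T2 k X
      ⊔ TIdealGenF k X {FreeAlgebra.ι k x - FreeAlgebra.ι k x ^ Fintype.card k} := by
  classical
  intro f hf
  set I := TIdealGenF k X {FreeAlgebra.ι k x - FreeAlgebra.ι k x ^ Fintype.card k} with hI
  let J : Ideal (MvPolynomial X k) :=
    { carrier := {p | ∃ G ∈ I, piAb G = p}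
      zero_mem' := ⟨0, zero_mem _, map_zero _⟩
      add_mem' := by
        rintro p1 p2 ⟨G1, hG1, rfl⟩ ⟨G2, hG2, rfl⟩
        exact ⟨G1 + G2, add_mem hG1 hG2, map_add _ _ _⟩
      smul_mem' := by
        rintro r p ⟨G, hG, rfl⟩
        obtain ⟨H, rfl⟩ := piAb_surjective r
        exact ⟨H * G, ((isTIdeal_TIdealGenF _).2 G hG H).1, by rw [map_mul, smul_eq_mul]⟩ }
  have h1 : piAb f ∈ Ideal.span {g : MvPolynomial X k |
      ∃ y : X, g = MvPolynomial.X y ^ Fintype.card k - MvPolynomial.X y} :=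
    null_gen _ (fun w => by rw [eval_piAb]; exact hf w)
  have h2 : piAb f ∈ J := by
    refine Ideal.span_le.mpr ?_ h1
    rintro g ⟨y, rfl⟩
    refine ⟨FreeAlgebra.ι k y ^ Fintype.card k - FreeAlgebra.ι k y, ?_, ?_⟩
    · rw [hI]
      have h3 := neg_mem (gen_mem_I (k := k) x y)
      simpa using h3
    · rw [map_sub, map_pow]
      simp [piAb]
  obtain ⟨G, hG, hGp⟩ := h2
  have h3 : f - G ∈ T2 k X := mem_T2_of_piAb_eq_zero (by rw [map_sub, hGp, sub_self])
  exact Submodule.mem_sup.mpr ⟨f - G, h3, G, hG, by abel⟩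

end MainAux

end WMax


/-- For a finite field `k` with `q` elements, `W = k·1 + T⁽²⁾ + {ι(x) - ι(x)^q}ᵀ` is a
maximal T-space of `k⟨X⟩`. -/
theorem W_isMaximal_unitary (k : Type*) [Field k] [Fintype k] (q : ℕ)
    (hq : Fintype.card k = q) (X : Type*) [Nonempty X] (x : X) :
    IsTSpaceF k X (Submodule.span k {(1 : FreeAlgebra k X)} ⊔ T2 k X ⊔
        TIdealGenF k X {FreeAlgebra.ι k x - (FreeAlgebra.ι k x) ^ q}) ∧
      (Submodule.span k {(1 : FreeAlgebra k X)} ⊔ T2 k X ⊔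
        TIdealGenF k X {FreeAlgebra.ι k x - (FreeAlgebra.ι k x) ^ q}) ≠ ⊤ ∧
      ∀ U : Submodule k (FreeAlgebra k X), IsTSpaceF k X U →
        (Submodule.span k {(1 : FreeAlgebra k X)} ⊔ T2 k X ⊔
          TIdealGenF k X {FreeAlgebra.ι k x - (FreeAlgebra.ι k x) ^ q}) < U →
        U = ⊤ := by
  subst hq
  classical
  open WMax in
  set I := TIdealGenF k X {FreeAlgebra.ι k x - FreeAlgebra.ι k x ^ Fintype.card k} with hI
  set W := Submodule.span k {(1 : FreeAlgebra k X)} ⊔ T2 k X ⊔ I with hW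
  have hle1 : Submodule.span k {(1 : FreeAlgebra k X)} ≤ W := le_sup_left.trans le_sup_left
  have hle2 : T2 k X ≤ W := le_sup_right.trans le_sup_left
  have hle3 : I ≤ W := le_sup_right
  have hone : (1 : FreeAlgebra k X) ∈ W := hle1 (Submodule.mem_span_singleton_self 1)
  have halg : ∀ c : k, algebraMap k (FreeAlgebra k X) c ∈ W := by
    intro c
    rw [Algebra.algebraMap_eq_smul_one]
    exact hle1 (Submodule.mem_span_singleton.mpr ⟨c, rfl⟩)
  have hevan_le_W : evanish k X ≤ W := (evanish_le_sup x).trans (sup_le hle2 hle3)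
  have hW_le_const : W ≤ constish k X := by
    rw [hW]
    refine sup_le (sup_le ?_ ?_) ?_
    · rw [Submodule.span_le]
      intro g hg
      rw [Set.mem_singleton_iff] at hg
      subst hg
      exact ⟨1, fun p => map_one _⟩
    · intro f hf
      exact ⟨0, mem_evanish.mp (T2_le_evanish hf)⟩
    · intro f hf
      exact ⟨0, mem_evanish.mp (I_le_evanish x hf)⟩
  refine ⟨?_, ?_, ?_⟩
  · -- W is a T-space
    intro φ v hv
    obtain ⟨ab, hab, cI, hcI, rfl⟩ := Submodule.mem_sup.mp hv
    obtain ⟨a, ha, b, hb, rfl⟩ := Submodule.mem_sup.mp hab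
    rw [map_add, map_add]
    refine add_mem (add_mem ?_ ?_) ?_
    · obtain ⟨r, rfl⟩ := Submodule.mem_span_singleton.mp ha
      rw [map_smul, map_one]
      exact hle1 (Submodule.mem_span_singleton.mpr ⟨r, rfl⟩)
    · exact hle2 (isTIdeal_T2.1 φ _ hb)
    · exact hle3 ((isTIdeal_TIdealGenF _).1 φ _ hcI)
  · -- W ≠ ⊤
    intro htop
    have hx : FreeAlgebra.ι k x ∈ constish k X := hW_le_const (htop ▸ Submodule.mem_top)
    obtain ⟨c, hc⟩ := hx
    have h0 := hc (fun _ => 0)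
    have h1 := hc (fun _ => 1)
    rw [ev_ι] at h0 h1
    exact zero_ne_one (h0.trans h1.symm)
  · -- maximality
    intro U hU hlt
    have hWU : W ≤ U := hlt.le
    obtain ⟨u, huU, huW⟩ := SetLike.exists_of_lt hlt
    have hone_U : (1 : FreeAlgebra k X) ∈ U := hWU hone
    have hnc : ∀ c : k, ∃ p : X → k, ev p u ≠ c := by
      intro c
      by_contra hcon
      push_neg at hcon
      apply huW
      have h1 : u - algebraMap k (FreeAlgebra k X) c ∈ evanish k X := by
        rw [mem_evanish]
        intro p
        rw [map_sub, hcon p, ev_algebraMap, sub_self]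
      have h2 := add_mem (hevan_le_W h1) (halg c)
      simpa using h2
    set p₁ : X → k := fun _ => 0 with hp₁
    set a := ev p₁ u with ha
    obtain ⟨p₂, hp₂⟩ := hnc a
    set b := ev p₂ u with hb
    have hba : b - a ≠ 0 := sub_ne_zero.mpr hp₂
    have hq1 : Fintype.card k - 1 ≠ 0 := by
      have h2 : 2 ≤ Fintype.card k := Fintype.one_lt_card
      omega
    set θ : FreeAlgebra k X →ₐ[k] FreeAlgebra k X := FreeAlgebra.lift k
      (fun y => algebraMap k (FreeAlgebra k X) (p₁ y)
        + (p₂ y - p₁ y) • FreeAlgebra.ι k x ^ (Fintype.card k - 1)) with hθ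
    have hv : ∀ p : X → k, ev p (θ u) = if p x = 0 then a else b := by
      intro p
      rw [ev_comp]
      have hin : (fun y => ev p (θ (FreeAlgebra.ι k y)))
          = fun y => p₁ y + (p₂ y - p₁ y) * p x ^ (Fintype.card k - 1) := by
        funext y
        rw [hθ]
        simp [ev, ev_algebraMap, smul_eq_mul]
      rw [hin]
      by_cases hpx : p x = 0
      · rw [if_pos hpx]
        simp only [hpx, zero_pow hq1, mul_zero, add_zero]
        rfl
      · rw [if_neg hpx, FiniteField.pow_card_sub_one_eq_one _ hpx]
        simp only [mul_one]
        have hfe : (fun y => p₁ y + (p₂ y - p₁ y)) = p₂ := by funext y; ring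
        rw [hfe]
    have hvU : θ u ∈ U := hU θ u huU
    set w : FreeAlgebra k X := (b - a)⁻¹ • (θ u - algebraMap k (FreeAlgebra k X) a) with hw
    have hwU : w ∈ U := Submodule.smul_mem _ _ (sub_mem hvU (hWU (halg a)))
    have hwval : ∀ p : X → k, ev p w = if p x = 0 then 0 else 1 := by
      intro p
      rw [hw, map_smul, map_sub, hv p, ev_algebraMap, smul_eq_mul]
      by_cases hpx : p x = 0
      · rw [if_pos hpx, if_pos hpx, sub_self, mul_zero]
      · rw [if_neg hpx, if_neg hpx, inv_mul_cancel₀ hba]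
    set d : FreeAlgebra k X := 1 - w with hd
    have hdU : d ∈ U := sub_mem hone_U hwU
    have hdval : ∀ p : X → k, ev p d = if p x = 0 then 1 else 0 := by
      intro p
      rw [hd, map_sub, map_one, hwval p]
      by_cases hpx : p x = 0 <;> simp [hpx]
    have hind : ∀ g : FreeAlgebra k X, ∀ c : k, ∃ eelem ∈ U, ∀ p : X → k,
        ev p eelem = if ev p g = c then 1 else 0 := by
      intro g c
      set σg : FreeAlgebra k X →ₐ[k] FreeAlgebra k X :=
        FreeAlgebra.lift k (fun _ : X => g - algebraMap k (FreeAlgebra k X) c) with hσ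
      refine ⟨σg d, hU σg d hdU, ?_⟩
      intro p
      rw [ev_comp]
      have hfun : (fun y => ev p (σg (FreeAlgebra.ι k y))) = fun _ : X => ev p g - c := by
        funext y
        rw [hσ]
        simp [ev_algebraMap]
      rw [hfun, hdval]
      simp [sub_eq_zero]
    rw [eq_top_iff]
    intro f _
    choose E hEU hEval using fun c : k => hind f c
    set Fsum := ∑ c : k, c • E c with hF
    have hFU : Fsum ∈ U := Submodule.sum_mem _ fun c _ => Submodule.smul_mem _ _ (hEU c)
    have hFval : ∀ p : X → k, ev p Fsum = ev p f := by
      intro p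
      rw [hF, map_sum]
      have hterm : ∀ c : k, ev p (c • E c) = if ev p f = c then c else 0 := by
        intro c
        rw [map_smul, hEval c p, smul_eq_mul]
        by_cases h : ev p f = c <;> simp [h]
      rw [Finset.sum_congr rfl fun c _ => hterm c]
      rw [Finset.sum_ite_eq Finset.univ (ev p f) fun c => c]
      simp
    have hdiff : f - Fsum ∈ evanish k X := by
      rw [mem_evanish]
      intro p
      rw [map_sub, hFval p, sub_self]
    have hfin := add_mem (hWU (hevan_le_W hdiff)) hFU
    simpa using hfin
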